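/- For every integer m ≥ 0 and every nonzero complex number λ, ∫_{-1}^1 e^{-iλx} T_m(x) dx = ∑_{n=1}^{m+1} α_n^m [e^{iλ}/(iλ)^n + (-1)^{n+m} e^{-iλ}/(iλ)^n], where α_1^m = (-1)^m, α_2^m = (-1)^{m+1} m^2, and for 3 ≤ n ≤ m+1, α_n^m = (-1)^{m+n-1} 2^{n-2} m ∑_{k=1}^{m-n+2} C(n+k-3, k-1) ∏_{j=k}^{n+k-3} (m-j). -/

import Mathlib

open MeasureTheory Finset Polynomial

/-- The coefficients `α_n^m` in the finite Fourier transform of the Chebyshev polynomials. -/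
noncomputable def alphaCoeff (m n : ℕ) : ℂ :=
  if n = 1 then (-1:ℂ)^m
  else if n = 2 then (-1:ℂ)^(m+1) * (m:ℂ)^2
  else (-1:ℂ)^(m+n-1) * 2^(n-2) * (m:ℂ) *
    ∑ k ∈ Finset.Icc 1 (m - n + 2), ((n + k - 3).choose (k - 1) : ℂ) *
      ∏ j ∈ Finset.Icc k (n + k - 3), ((m:ℂ) - (j:ℂ))

namespace ChebyshevFourierAux
open Polynomial.Chebyshev

lemma cheb_ode (n : ℤ) : (1 - X^2) * derivative (derivative (T ℂ n))
    = X * derivative (T ℂ n) - (n:ℂ[X])^2 * T ℂ n := by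
  have h1 := add_one_mul_T_eq_poly_in_U (R := ℂ) (n - 1)
  have h2 := T_derivative_eq_U (R := ℂ) n
  have h3 := congrArg derivative h2
  rw [derivative_mul] at h3
  simp only [sub_add_cancel, derivative_intCast, zero_mul, zero_add] at h1 h3
  push_cast at h1
  linear_combination (norm := (push_cast; ring_nf)) (n:ℂ[X]) * h1 - X * h2 + (1 - X^2) * h3

noncomputable def qq (m k : ℕ) : ℂ[X] := derivative^[k] (T ℂ m)

lemma qq_succ (m k : ℕ) : qq m (k+1) = derivative (qq m k) := Function.iterate_succ_apply' _ _ _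

lemma ode_iter (m : ℕ) : ∀ k : ℕ, (1 - X^2) * qq m (k+2)
    = (2*(k:ℂ[X])+1) * X * qq m (k+1) - ((m:ℂ[X])^2 - (k:ℂ[X])^2) * qq m k := by
  intro k
  induction k with
  | zero =>
    have h := cheb_ode (m : ℤ)
    simp only [qq, Function.iterate_succ_apply', Function.iterate_zero_apply,
      Function.iterate_one]
    push_cast at h ⊢
    linear_combination (norm := ring_nf) h
  | succ k ih =>
    have h := congrArg derivative ih
    simp only [derivative_mul, derivative_sub, derivative_one, derivative_X, derivative_X_pow,
      derivative_mul, derivative_add, derivative_ofNat, derivative_natCast, derivative_pow,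
      Polynomial.C_eq_natCast, ← qq_succ] at h
    rw [show k+2+1 = k+3 by omega, show k+1+1 = k+2 by omega] at h
    push_cast at h ⊢
    linear_combination (norm := ring_nf) h

lemma T_eval_one (n : ℤ) : (T ℂ n).eval 1 = 1 := by
  induction n using Polynomial.Chebyshev.induct with
  | zero => simp
  | one => simp
  | add_two n ih1 ih2 => rw [T_add_two]; simp_all; ring
  | neg_add_one n ih1 ih2 => rw [T_sub_one]; simp_all; ring

lemma T_eval_neg_one (m : ℕ) : (T ℂ m).eval (-1) = (-1)^m := by
  induction m using Nat.strong_induction_on with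
  | _ m ih =>
    match m with
    | 0 => simp
    | 1 => simp
    | (k+2) =>
      have h : ((k+2 : ℕ) : ℤ) = (k:ℤ) + 2 := by push_cast; ring
      rw [h, T_add_two]
      have i1 := ih (k+1) (by omega)
      have i2 := ih k (by omega)
      push_cast at i1 i2 ⊢
      simp only [eval_sub, eval_mul, eval_ofNat, eval_X, i1, i2]
      ring

noncomputable def tt (m k : ℕ) : ℂ := (qq m k).eval 1
noncomputable def ss (m k : ℕ) : ℂ := (qq m k).eval (-1)

lemma tt_zero (m : ℕ) : tt m 0 = 1 := T_eval_one m
lemma ss_zero (m : ℕ) : ss m 0 = (-1)^m := T_eval_neg_one m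

lemma tt_succ (m k : ℕ) : tt m (k+1) = ((m:ℂ)^2 - (k:ℂ)^2) / (2*k+1) * tt m k := by
  have h := congrArg (eval (1:ℂ)) (ode_iter m k)
  simp only [eval_mul, eval_sub, eval_one, eval_pow, eval_X, eval_add, eval_ofNat,
    eval_natCast] at h
  norm_num at h
  have h2 : (2*(k:ℂ)+1) ≠ 0 := by
    have : ((2*k+1 : ℕ) : ℂ) ≠ 0 := Nat.cast_ne_zero.2 (by omega)
    push_cast at this; exact this
  unfold tt
  rw [div_mul_eq_mul_div, eq_div_iff h2]
  linear_combination -h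


lemma ss_succ (m k : ℕ) : ss m (k+1) = -(((m:ℂ)^2 - (k:ℂ)^2) / (2*k+1)) * ss m k := by
  have h := congrArg (eval (-1:ℂ)) (ode_iter m k)
  simp only [eval_mul, eval_sub, eval_one, eval_pow, eval_X, eval_add, eval_ofNat,
    eval_natCast] at h
  norm_num at h
  have h2 : (2*(k:ℂ)+1) ≠ 0 := by
    have : ((2*k+1 : ℕ) : ℂ) ≠ 0 := Nat.cast_ne_zero.2 (by omega)
    push_cast at this; exact this
  unfold ss
  rw [neg_mul, div_mul_eq_mul_div, ← neg_div, eq_div_iff h2]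
  linear_combination h

lemma ss_eq (m k : ℕ) : ss m k = (-1)^(m+k) * tt m k := by
  induction k with
  | zero => rw [ss_zero, tt_zero, pow_add]; ring
  | succ k ih =>
    rw [ss_succ, tt_succ, ih, pow_add, pow_add, pow_add]
    ring

lemma tt_closed (m k : ℕ) : tt m k = ∏ j ∈ range k, (((m:ℂ)^2 - (j:ℂ)^2) / (2*j+1)) := by
  induction k with
  | zero => simp [tt_zero]
  | succ k ih => rw [tt_succ, ih, Finset.prod_range_succ]; ring

lemma natDegree_T_le (m : ℕ) : (T ℂ m).natDegree ≤ m := by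
  induction m using Nat.strong_induction_on with
  | _ m ih =>
    match m with
    | 0 => simp [T_zero]
    | 1 => simp [T_one]
    | (k+2) =>
      have h : ((k+2 : ℕ) : ℤ) = (k:ℤ) + 2 := by push_cast; ring
      rw [h, T_add_two]
      have i1 := ih (k+1) (by omega)
      have i2 := ih k (by omega)
      push_cast at i1
      refine (natDegree_sub_le _ _).trans ?_
      simp only [max_le_iff]
      constructor
      · refine (natDegree_mul_le).trans ?_
        have : (2 * X : ℂ[X]).natDegree ≤ 1 := by
          refine (natDegree_mul_le).trans ?_
          simp
        omega
      · omega

lemma qq_zero_of_big (m : ℕ) : qq m (m+1) = 0 :=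
  Polynomial.iterate_derivative_eq_zero (Nat.lt_succ_of_le (natDegree_T_le m))

lemma hockey (n a : ℕ) : ∑ i ∈ range n, i.choose a = n.choose (a+1) := by
  induction n with
  | zero => simp
  | succ n ih => rw [Finset.sum_range_succ, ih, Nat.choose_succ_succ']; exact Nat.add_comm _ _

lemma sum_choose_mul_choose (a : ℕ) : ∀ (N : ℕ), ∀ b : ℕ,
    ∑ i ∈ range (N+1), (i.choose a) * ((N-i).choose b) = (N+1).choose (a+b+1) := by
  intro N
  induction N with
  | zero =>
    intro b
    simp only [range_one, sum_singleton, Nat.zero_sub, Nat.choose]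
    rcases a with _|a <;> rcases b with _|b <;>
      simp [Nat.choose_eq_zero_of_lt, Nat.choose_one_right, Nat.succ_le_iff]
  | succ N ih =>
    intro b
    rcases b with _|b
    · simp only [Nat.choose_zero_right, mul_one]
      exact hockey (N+2) a
    · rw [Finset.sum_range_succ]
      have step : ∀ i ∈ range (N+1), (i.choose a) * ((N+1-i).choose (b+1))
          = (i.choose a) * ((N-i).choose (b+1)) + (i.choose a) * ((N-i).choose b) := by
        intro i hi
        simp only [mem_range] at hi
        rw [show N+1-i = (N-i)+1 by omega, Nat.choose_succ_succ]
        ring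
      rw [Finset.sum_congr rfl step, Finset.sum_add_distrib, ih (b+1), ih b]
      rw [Nat.sub_self, Nat.choose_zero_succ, mul_zero, add_zero,
        show a+(b+1)+1 = (a+b+1)+1 by omega, show N+1+1 = (N+1)+1 from rfl,
        Nat.choose_succ_succ']
      exact Nat.add_comm _ _

lemma two_pow_fact (p : ℕ) : 2^p * p.factorial * ∏ j ∈ range p, (2*j+1) = (2*p).factorial := by
  induction p with
  | zero => simp
  | succ p ih =>
    rw [Finset.prod_range_succ, show 2*(p+1) = 2*p+1+1 by omega, Nat.factorial_succ (2*p+1),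
      Nat.factorial_succ (2*p), ← ih, Nat.factorial_succ p]
    ring

lemma prod_sq_sub (m p : ℕ) (h1 : 1 ≤ p) (h2 : p ≤ m) :
    ∏ j ∈ range p, (m^2 - j^2) = m * (m+p-1).descFactorial (2*p-1) := by
  induction p, h1 using Nat.le_induction with
  | base => simp; ring
  | succ p hp ih =>
    have hpm : p ≤ m := by omega
    rw [Finset.prod_range_succ, ih hpm]
    have e1 : m + (p+1) - 1 = (m+p-1)+1 := by omega
    have e2 : 2*(p+1)-1 = (2*p-1)+1+1 := by omega
    rw [e1, e2, Nat.succ_descFactorial_succ, Nat.descFactorial_succ]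
    have e3 : m + p - 1 - (2*p-1) = m - p := by omega
    have e4 : m + p - 1 + 1 = m + p := by omega
    have e5 : m^2 - p^2 = (m+p) * (m-p) := by
      rcases Nat.exists_eq_add_of_le hpm with ⟨c, rfl⟩
      have h6 : (p+c)^2 = p^2 + (p+c+p)*c := by ring
      have h7 : p + c - p = c := by omega
      rw [h6, h7]
      omega
    rw [e3, e4, e5]
    ring

lemma prod_desc_cast (m k : ℕ) : ∀ q : ℕ, k + q ≤ m + 1 →
    ∏ j ∈ range q, ((m:ℂ) - ((k+j : ℕ):ℂ)) = ((m-k).descFactorial q : ℂ) := by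
  intro q
  induction q with
  | zero => simp
  | succ q ih =>
    intro h
    rw [Finset.prod_range_succ, ih (by omega), Nat.descFactorial_succ]
    have h1 : k + q ≤ m := by omega
    have : ((m:ℂ) - ((k+q:ℕ):ℂ)) = ((m - k - q : ℕ) : ℂ) := by
      rw [show m - k - q = m - (k+q) by omega, Nat.cast_sub h1]
    rw [this]
    push_cast
    ring

lemma two_pow_fact' (p : ℕ) (hp : 1 ≤ p) :
    2^(p-1) * (p-1).factorial * ∏ j ∈ range p, (2*j+1) = (2*p-1).factorial := by
  have h := two_pow_fact p
  obtain ⟨q, rfl⟩ : ∃ q, p = q+1 := ⟨p-1, by omega⟩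
  simp only [Nat.add_sub_cancel]
  rw [show 2*(q+1) = (2*q+1)+1 by omega, Nat.factorial_succ (2*q+1), pow_succ,
    Nat.factorial_succ q] at h
  have key : (2*(q+1)) * (2^q * q.factorial * ∏ j ∈ range (q+1), (2*j+1))
      = (2*(q+1)) * (2*q+1).factorial := by
    calc (2*(q+1)) * (2^q * q.factorial * ∏ j ∈ range (q+1), (2*j+1))
        = 2^q * 2 * ((q+1) * q.factorial) * ∏ j ∈ range (q+1), (2*j+1) := by ring
      _ = (2*q+1+1) * (2*q+1).factorial := h
      _ = (2*(q+1)) * (2*q+1).factorial := by ring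
  have e : 2*(q+1)-1 = 2*q+1 := by omega
  rw [e]
  exact Nat.eq_of_mul_eq_mul_left (by omega) key

lemma vandermonde_upper (m p : ℕ) (h2 : 2 ≤ p) (hpm : p ≤ m) :
    ∑ k ∈ Icc 1 (m-p+1), (p+k-2).choose (p-1) * (m-k).choose (p-1)
      = (m+p-1).choose (2*p-1) := by
  have big := sum_choose_mul_choose (p-1) (m+p-2) (p-1)
  rw [show m+p-2+1 = m+p-1 by omega, show p-1+(p-1)+1 = 2*p-1 by omega] at big
  rw [← big]
  -- restrict the big sum to Icc (p-1) (m-1)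
  have sub : Icc (p-1) (m-1) ⊆ range (m+p-1) := by
    intro i hi
    simp only [mem_Icc] at hi
    simp only [mem_range]
    omega
  rw [← Finset.sum_subset sub (by
    intro i hi hni
    simp only [mem_range] at hi
    simp only [mem_Icc, not_and_or, not_le] at hni
    rcases hni with h | h
    · rw [Nat.choose_eq_zero_of_lt (by omega)]; ring
    · rw [Nat.choose_eq_zero_of_lt (show m+p-2-i < p-1 by omega), mul_zero])]
  -- reindex both sides
  rw [show Icc 1 (m-p+1) = Ico 1 (m-p+1+1) by rw [Finset.Ico_add_one_right_eq_Icc],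
    show Icc (p-1) (m-1) = Ico (p-1) m by rw [← Finset.Ico_add_one_right_eq_Icc]; congr 1; omega,
    Finset.sum_Ico_eq_sum_range, Finset.sum_Ico_eq_sum_range]
  rw [show m-p+1+1-1 = m-(p-1) by omega]
  refine Finset.sum_congr rfl ?_
  intro j hj
  simp only [mem_range] at hj
  congr 1
  · congr 1; omega
  · congr 1; omega

lemma closed_formula (m p : ℕ) (h2 : 2 ≤ p) (hpm : p ≤ m) :
    ∏ j ∈ range p, (((m:ℂ)^2 - (j:ℂ)^2) / (2*(j:ℂ)+1))
      = 2^(p-1) * (m:ℂ) * ∑ k ∈ Icc 1 (m-p+1), ((p+k-2).choose (k-1) : ℂ) *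
          ∏ j ∈ Icc k (p+k-2), ((m:ℂ) - (j:ℂ)) := by
  -- rewrite each summand on the RHS
  have hsum : ∀ k ∈ Icc 1 (m-p+1), ((p+k-2).choose (k-1) : ℂ) *
      ∏ j ∈ Icc k (p+k-2), ((m:ℂ) - (j:ℂ))
      = (((p+k-2).choose (p-1) * ((p-1).factorial * (m-k).choose (p-1)) : ℕ) : ℂ) := by
    intro k hk
    simp only [mem_Icc] at hk
    have hchoose : (p+k-2).choose (k-1) = (p+k-2).choose (p-1) := by
      have := Nat.choose_symm (show p-1 ≤ p+k-2 by omega) (n := p+k-2)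
      rw [show p+k-2-(p-1) = k-1 by omega] at this
      exact this
    have hprod : ∏ j ∈ Icc k (p+k-2), ((m:ℂ) - (j:ℂ))
        = (((m-k).descFactorial (p-1) : ℕ) : ℂ) := by
      rw [show Icc k (p+k-2) = Ico k (p+k-1) by rw [← Finset.Ico_add_one_right_eq_Icc]; congr 1; omega,
        Finset.prod_Ico_eq_prod_range, show p+k-1-k = p-1 by omega]
      exact prod_desc_cast m k (p-1) (by omega)
    rw [hchoose, hprod, Nat.descFactorial_eq_factorial_mul_choose]
    push_cast
    ring
  rw [Finset.sum_congr rfl hsum, ← Nat.cast_sum]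
  have hfac : ∑ x ∈ Icc 1 (m-p+1), (p+x-2).choose (p-1) * ((p-1).factorial * (m-x).choose (p-1))
      = (p-1).factorial * ∑ x ∈ Icc 1 (m-p+1), (p+x-2).choose (p-1) * (m-x).choose (p-1) := by
    rw [Finset.mul_sum]; exact Finset.sum_congr rfl (fun x _ => by ring)
  rw [hfac, vandermonde_upper m p h2 hpm]
  -- LHS: split the product
  rw [Finset.prod_div_distrib]
  have hnum : ∏ j ∈ range p, ((m:ℂ)^2 - (j:ℂ)^2) = ((∏ j ∈ range p, (m^2 - j^2) : ℕ) : ℂ) := by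
    rw [Nat.cast_prod]
    refine Finset.prod_congr rfl ?_
    intro j hj
    simp only [mem_range] at hj
    rw [Nat.cast_sub (by
      have : j ≤ m := by omega
      exact Nat.pow_le_pow_left this 2)]
    push_cast
    ring
  have hden : ∏ j ∈ range p, (2*(j:ℂ)+1) = ((∏ j ∈ range p, (2*j+1) : ℕ) : ℂ) := by
    rw [Nat.cast_prod]; push_cast; rfl
  have hden_ne : ((∏ j ∈ range p, (2*j+1) : ℕ) : ℂ) ≠ 0 := by
    rw [Nat.cast_ne_zero]
    exact Finset.prod_ne_zero_iff.2 (fun j _ => by omega)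
  rw [hnum, hden, div_eq_iff hden_ne]
  -- now a cast of a ℕ identity
  rw [prod_sq_sub m p (by omega) hpm]
  push_cast [← two_pow_fact' p (by omega), Nat.descFactorial_eq_factorial_mul_choose]
  ring

lemma qq_succ' (m k : ℕ) : derivative (qq m k) = qq m (k+1) :=
  (Function.iterate_succ_apply' _ _ _).symm

lemma integral_formula (m : ℕ) (l : ℂ) (hl : l ≠ 0) :
    (∫ x in (-1:ℝ)..1, Complex.exp (-Complex.I * l * x) * ((T ℂ m).eval (x:ℂ)))
      = ∑ k ∈ range (m+1), (Complex.exp (Complex.I * l) * ((qq m k).eval (-1))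
          - Complex.exp (-(Complex.I * l)) * ((qq m k).eval 1)) / (Complex.I * l)^(k+1) := by
  set c : ℂ := Complex.I * l with hc_def
  have hc : c ≠ 0 := mul_ne_zero Complex.I_ne_zero hl
  set Q : ℂ[X] := ∑ k ∈ range (m+1), Polynomial.C ((c^(k+1))⁻¹) * qq m k with hQ_def
  have key2 : Polynomial.C c * Q - derivative Q = T ℂ m := by
    rw [hQ_def, derivative_sum, Finset.mul_sum]
    simp only [derivative_C_mul, qq_succ']
    have : ∀ k ∈ range (m+1), Polynomial.C c * (Polynomial.C ((c^(k+1))⁻¹) * qq m k)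
        = Polynomial.C ((c^k)⁻¹) * qq m k := by
      intro k _
      rw [← mul_assoc, ← Polynomial.C_mul]
      congr 2
      rw [pow_succ]
      field_simp
    rw [Finset.sum_congr rfl this, ← Finset.sum_sub_distrib]
    have tele := Finset.sum_range_sub' (fun k => Polynomial.C ((c^k)⁻¹) * qq m k) (m+1)
    rw [tele, qq_zero_of_big, mul_zero, sub_zero, pow_zero, inv_one, Polynomial.C_1, one_mul]
    rfl
  have hrw : -Complex.I * l = -c := by rw [hc_def]; ring
  simp only [hrw]
  have hcont : Continuous fun x : ℝ => Complex.exp (-c * x) * ((T ℂ m).eval (x:ℂ)) := by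
    apply Continuous.mul
    · exact Complex.continuous_exp.comp (by continuity)
    · exact ((T ℂ (m:ℤ)).continuous_aeval).comp Complex.continuous_ofReal
  have hderiv : ∀ x ∈ Set.uIcc (-1:ℝ) 1,
      HasDerivAt (fun y : ℝ => -(Complex.exp (-c*y) * Q.eval (y:ℂ)))
      (Complex.exp (-c * x) * ((T ℂ m).eval (x:ℂ))) x := by
    intro x _
    have hexp : HasDerivAt (fun y : ℝ => Complex.exp (-c * y)) (Complex.exp (-c*x) * (-c * 1)) x :=
      (((hasDerivAt_id (x:ℂ)).const_mul (-c)).cexp).comp_ofReal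
    have hQ : HasDerivAt (fun y : ℝ => Q.eval (y:ℂ)) ((derivative Q).eval (x:ℂ)) x :=
      (Q.hasDerivAt (x:ℂ)).comp_ofReal
    have hmul := (hexp.mul hQ).neg
    convert hmul using 1
    case e'_4 => rfl
    case e'_8 => rfl
    have hev := congrArg (fun P => Polynomial.eval ((x:ℝ):ℂ) P) key2
    simp only [eval_sub, eval_mul, eval_C] at hev
    rw [← hev]
    ring
  rw [intervalIntegral.integral_eq_sub_of_hasDerivAt hderiv (hcont.intervalIntegrable _ _)]
  simp only [hQ_def, eval_finset_sum, eval_mul, eval_C, Complex.ofReal_one, Complex.ofReal_neg,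
    mul_one, neg_mul, neg_neg]
  rw [show -(c * (-1:ℂ)) = c by ring, Finset.mul_sum, Finset.mul_sum, ← Finset.sum_neg_distrib, ← Finset.sum_neg_distrib,
    ← Finset.sum_sub_distrib]
  refine Finset.sum_congr rfl fun k _ => ?_
  rw [div_eq_mul_inv]
  ring


lemma tt_one (m : ℕ) : tt m 1 = (m:ℂ)^2 := by
  rw [show (1:ℕ) = 0 + 1 from rfl, tt_succ, tt_zero]
  norm_num

lemma alpha_eq (m : ℕ) : ∀ n : ℕ, 1 ≤ n → n ≤ m+1 →
    alphaCoeff m n = (-1:ℂ)^(m+n-1) * tt m (n-1) := by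
  intro n h1 h2
  match n, h1 with
  | 1, _ => rw [alphaCoeff]; simp [tt_zero]
  | 2, _ =>
    simp [alphaCoeff, tt_one, show m+2-1 = m+1 from by omega]
  | (r+3), _ =>
    have hp : r+2 ≤ m := by omega
    have key := (tt_closed m (r+2)).trans (closed_formula m (r+2) (by omega) hp)
    rw [alphaCoeff]
    simp only [if_neg (by omega : ¬ r+3 = 1), if_neg (by omega : ¬ r+3 = 2)]
    have hsub : Icc 1 (m-(r+2)+1) ⊆ Icc 1 (m-(r+3)+2) := by
      intro k hk
      simp only [mem_Icc] at hk ⊢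
      omega
    have hS : (∑ k ∈ Icc 1 (m-(r+3)+2), ((r+3+k-3).choose (k-1) : ℂ) *
          ∏ j ∈ Icc k (r+3+k-3), ((m:ℂ) - (j:ℂ)))
        = ∑ k ∈ Icc 1 (m-(r+2)+1), ((r+2+k-2).choose (k-1) : ℂ) *
          ∏ j ∈ Icc k (r+2+k-2), ((m:ℂ) - (j:ℂ)) := by
      rw [← Finset.sum_subset hsub (by
        intro k hk hnk
        simp only [mem_Icc] at hk hnk
        have hm : m ∈ Icc k (r+3+k-3) := by
          simp only [mem_Icc]
          omega
        rw [Finset.prod_eq_zero hm (by rw [sub_self]), mul_zero])]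
      exact Finset.sum_congr rfl fun k hk => by rw [show r+3+k-3 = r+2+k-2 by omega]
    rw [hS, show r+3-2 = r+2-1 by omega, show r+3-1 = r+2 by omega, key]
    ring

end ChebyshevFourierAux


open ChebyshevFourierAux Polynomial.Chebyshev in
/-- Explicit formula for the finite Fourier transform of the Chebyshev polynomials. -/
theorem chebyshev_fourier (m : ℕ) (l : ℂ) (hl : l ≠ 0) :
    (∫ x in (-1:ℝ)..1, Complex.exp (-Complex.I * l * x) *
        (((Polynomial.Chebyshev.T ℝ m).eval x : ℝ) : ℂ)) =
      ∑ n ∈ Finset.Icc 1 (m + 1), alphaCoeff m n *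
        (Complex.exp (Complex.I * l) / (Complex.I * l)^n
          + (-1:ℂ)^(n+m) * Complex.exp (-Complex.I * l) / (Complex.I * l)^n) := by
  have cast_eval : ∀ x : ℝ, (((T ℝ m).eval x : ℝ) : ℂ) = (T ℂ m).eval (x:ℂ) := by
    intro x
    rw [← Polynomial.Chebyshev.map_T Complex.ofRealHom (m:ℤ), Polynomial.eval_map]
    exact (Polynomial.eval₂_at_apply Complex.ofRealHom x).symm
  simp only [cast_eval]
  rw [integral_formula m l hl]
  rw [show Icc 1 (m+1) = Ico 1 (m+2) by rw [← Finset.Ico_add_one_right_eq_Icc]; rfl,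
    Finset.sum_Ico_eq_sum_range, show m+2-1 = m+1 by omega]
  refine Finset.sum_congr rfl fun k hk => ?_
  simp only [mem_range] at hk
  have hq1 : (qq m k).eval 1 = tt m k := rfl
  have hq2 : (qq m k).eval (-1) = (-1:ℂ)^(m+k) * tt m k := ss_eq m k
  rw [hq1, hq2, alpha_eq m (1+k) (by omega) (by omega), show 1+k-1 = k by omega,
    show m+(1+k)-1 = m+k by omega]
  have hsign : (-1:ℂ)^(m+k) * (-1:ℂ)^(1+k+m) = -1 := by
    rw [← pow_add, show m+k+(1+k+m) = 2*(m+k)+1 by ring, pow_succ, pow_mul]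
    norm_num
  have hexp : Complex.exp (-Complex.I * l) = Complex.exp (-(Complex.I * l)) := by
    rw [neg_mul]
  rw [hexp]
  field_simp
  ring_nf
  rw [show ((-1:ℂ))^(m*2) = 1 by rw [mul_comm, pow_mul]; norm_num,
    show ((-1:ℂ))^(k*2) = 1 by rw [mul_comm, pow_mul]; norm_num]
  ring
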